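/- Compact domain for the DRO optimizers (Lemma 3.1): Any optimizer (x*, s*, v*) of the semi-infinite reformulated DRO problem — minimizing 1^⊤ v + Lθ s over x ∈ X, s ≥ 0, v ∈ ℝ^L subject to f(x,ξ) − v_ℓ − s‖ξ − ξ̂^ℓ‖ ≤ 0 for all ξ ∈ Ξ and ℓ ∈ {1,…,L} — with optimal value at most L f̄ satisfies s* ∈ [0, (f̄ − f̲)/θ] and v* ∈ [f̲, f̲ + L(f̄ − f̲)]^L. -/
import Mathlib


/-- Lemma 3.1 (compact domain for the DRO optimizers): any optimizer `(x*, s*, v*)` of the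
semi-infinite reformulated DRO problem whose optimal value is at most `L f̄` satisfies
`s* ∈ [0, (f̄ − f̲)/θ]` and `v* ∈ [f̲, f̲ + L(f̄ − f̲)]^L`. -/
theorem dro_compact_domain {d m : ℕ} (L : ℕ) (hL : 1 ≤ L)
    (X : Set (EuclideanSpace ℝ (Fin d))) (Ξ : Set (EuclideanSpace ℝ (Fin m)))
    (hX : IsCompact X) (hXconv : Convex ℝ X) (hΞ : IsCompact Ξ)
    (f : EuclideanSpace ℝ (Fin d) → EuclideanSpace ℝ (Fin m) → ℝ)
    (flow fbar : ℝ) (hbnd : ∀ x ∈ X, ∀ ξ ∈ Ξ, flow ≤ f x ξ ∧ f x ξ ≤ fbar)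
    (ξhat : Fin L → EuclideanSpace ℝ (Fin m)) (hξhat : ∀ ℓ, ξhat ℓ ∈ Ξ)
    (θ : ℝ) (hθ : 0 < θ)
    (xstar : EuclideanSpace ℝ (Fin d)) (hx : xstar ∈ X)
    (sstar : ℝ) (hs : 0 ≤ sstar) (vstar : Fin L → ℝ)
    -- feasibility for the semi-infinite constraints
    (hfeas : ∀ ℓ : Fin L, ∀ ξ ∈ Ξ,
      f xstar ξ - vstar ℓ - sstar * ‖ξ - ξhat ℓ‖ ≤ 0)
    -- objective value at most L f̄ (from optimality and L J*_ref = L J*_DRO ≤ L f̄)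
    (hval : ∑ ℓ, vstar ℓ + (L : ℝ) * θ * sstar ≤ (L : ℝ) * fbar) :
    sstar ∈ Set.Icc (0 : ℝ) ((fbar - flow) / θ) ∧
      ∀ ℓ : Fin L, vstar ℓ ∈ Set.Icc flow (flow + (L : ℝ) * (fbar - flow)) := by
  have hLpos : (0:ℝ) < (L:ℝ) := by exact_mod_cast Nat.lt_of_lt_of_le Nat.zero_lt_one hL
  have hvlow : ∀ ℓ : Fin L, flow ≤ vstar ℓ := by
    intro ℓ
    have h := hfeas ℓ (ξhat ℓ) (hξhat ℓ)
    simp only [sub_self, norm_zero, mul_zero] at h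
    have hf := (hbnd xstar hx (ξhat ℓ) (hξhat ℓ)).1
    linarith
  have hsumlow : (L:ℝ) * flow ≤ ∑ ℓ, vstar ℓ := by
    calc (L:ℝ) * flow = ∑ _ℓ : Fin L, flow := by
          simp [Finset.sum_const, mul_comm]
      _ ≤ ∑ ℓ, vstar ℓ := Finset.sum_le_sum fun ℓ _ => hvlow ℓ
  have hsub : (L:ℝ) * θ * sstar ≤ (L:ℝ) * (fbar - flow) := by ring_nf; nlinarith
  have hsle : sstar ≤ (fbar - flow) / θ := by
    rw [le_div_iff₀ hθ]
    nlinarith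
  refine ⟨⟨hs, hsle⟩, fun ℓ => ⟨hvlow ℓ, ?_⟩⟩
  have hrest : ((L:ℝ) - 1) * flow ≤ ∑ j ∈ Finset.univ.erase ℓ, vstar j := by
    have hcard : (Finset.univ.erase ℓ).card = L - 1 := by
      simp [Finset.card_erase_of_mem]
    calc ((L:ℝ) - 1) * flow = ∑ _j ∈ Finset.univ.erase ℓ, flow := by
          rw [Finset.sum_const, hcard, nsmul_eq_mul, Nat.cast_sub hL]
          push_cast; ring
      _ ≤ _ := Finset.sum_le_sum fun j _ => hvlow j
  have hsplit : vstar ℓ + ∑ j ∈ Finset.univ.erase ℓ, vstar j = ∑ j, vstar j := by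
    rw [Finset.add_sum_erase _ _ (Finset.mem_univ ℓ)]
  nlinarith [mul_nonneg (mul_nonneg hLpos.le hθ.le) hs]
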